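/- For all integers r ≥ 1 and s ≥ 1, with g = (r+1)(s+1), the product (s+1)!·(s+2)!···(s+r+1)! divides (1!·2!···r!)·g!; consequently the Castelnuovo number N = (1!·2!···r!·g!) / ((s+1)!·(s+2)!···(s+r+1)!) is a positive integer. -/

import Mathlib

open Finset Nat Matrix

-- divisibility core
theorem castelnuovo_dvd (r s : ℕ) :
    (∏ i ∈ Finset.range (r + 1), Nat.factorial (s + 1 + i)) ∣
      (∏ i ∈ Finset.range (r + 1), Nat.factorial i) *
        Nat.factorial ((r + 1) * (s + 1)) := by
  set g := (r + 1) * (s + 1) with hg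
  -- the rational matrix of inverse factorials
  set A : Matrix (Fin (r + 1)) (Fin (r + 1)) ℚ :=
    Matrix.of (fun i j => if (j : ℕ) ≤ s + 1 + (i : ℕ) then
      ((Nat.factorial (s + 1 + (i : ℕ) - (j : ℕ)) : ℚ))⁻¹ else 0) with hA
  -- Step 1: det of descFactorial matrix over ℤ is sf r
  have hdetZ : (Matrix.of (fun i j : Fin (r + 1) =>
      ((Nat.descFactorial (s + 1 + (i : ℕ)) (j : ℕ) : ℤ)))).det = (Nat.superFactorial r : ℤ) := by
    have h1 : (Matrix.of (fun i j : Fin (r + 1) =>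
        ((Nat.descFactorial (s + 1 + (i : ℕ)) (j : ℕ) : ℤ)))) =
        (Matrix.of (fun i j : Fin (r + 1) =>
          (descPochhammer ℤ (j : ℕ)).eval ((s + 1 + (i : ℕ) : ℕ) : ℤ))) := by
      ext i j
      simp only [Matrix.of_apply]
      rw [← descPochhammer_eval_eq_descFactorial ℤ (s + 1 + (i : ℕ)) (j : ℕ)]
    rw [h1, ← Matrix.det_eval_matrixOfPolynomials_eq_det_vandermonde
        (fun i : Fin (r + 1) => ((s + 1 + (i : ℕ) : ℕ) : ℤ))
        (fun j => descPochhammer ℤ (j : ℕ))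
        (fun j => descPochhammer_natDegree ℤ (j : ℕ))
        (fun j => monic_descPochhammer ℤ (j : ℕ))]
    have h2 : (fun i : Fin (r + 1) => ((s + 1 + (i : ℕ) : ℕ) : ℤ)) =
        (fun i : Fin (r + 1) => ((i : ℕ) : ℤ) + ((s : ℤ) + 1)) := by
      funext i; push_cast; ring
    rw [h2, Matrix.det_vandermonde_add]
    exact_mod_cast Matrix.det_vandermonde_id_eq_superFactorial (R := ℤ) r
  -- Step 2: over ℚ, row-scaled version
  have hentry : ∀ i j : Fin (r + 1),
      ((Nat.factorial (s + 1 + (i : ℕ)) : ℚ)) * A i j =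
        ((Nat.descFactorial (s + 1 + (i : ℕ)) (j : ℕ) : ℚ)) := by
    intro i j
    by_cases h : (j : ℕ) ≤ s + 1 + (i : ℕ)
    · have hf := Nat.factorial_mul_descFactorial h
      rw [hA]
      simp only [Matrix.of_apply, if_pos h]
      have hne : ((Nat.factorial (s + 1 + (i : ℕ) - (j : ℕ)) : ℚ)) ≠ 0 := by
        exact_mod_cast (Nat.factorial_pos _).ne'
      field_simp
      exact_mod_cast hf.symm
    · rw [hA]
      simp only [Matrix.of_apply, if_neg h, mul_zero]
      rw [Nat.descFactorial_eq_zero_iff_lt.2 (by omega)]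
      simp
  have hdetQ : (∏ i : Fin (r + 1), ((Nat.factorial (s + 1 + (i : ℕ)) : ℚ))) * A.det =
      (Nat.superFactorial r : ℚ) := by
    rw [← Matrix.det_mul_column (fun i : Fin (r + 1) => ((Nat.factorial (s + 1 + (i : ℕ)) : ℚ))) A]
    have : (Matrix.of fun i j : Fin (r + 1) => ((Nat.factorial (s + 1 + (i : ℕ)) : ℚ)) * A i j) =
        (Matrix.of (fun i j : Fin (r + 1) =>
          ((Nat.descFactorial (s + 1 + (i : ℕ)) (j : ℕ) : ℚ)))) := by
      ext i j; exact hentry i j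
    rw [this]
    have hmap : (Matrix.of (fun i j : Fin (r + 1) =>
        ((Nat.descFactorial (s + 1 + (i : ℕ)) (j : ℕ) : ℚ)))) =
        ((Int.castRingHom ℚ).mapMatrix (Matrix.of (fun i j : Fin (r + 1) =>
          ((Nat.descFactorial (s + 1 + (i : ℕ)) (j : ℕ) : ℤ))))) := by
      ext i j
      simp
    rw [hmap, ← RingHom.map_det (Int.castRingHom ℚ), hdetZ]
    simp
  -- Step 3: g! * det A is an integer
  have hterm : ∀ σ : Equiv.Perm (Fin (r + 1)), ∃ z : ℤ,
      (z : ℚ) = (Nat.factorial g : ℚ) * ∏ i : Fin (r + 1), A (σ i) i := by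
    intro σ
    by_cases h : ∀ i : Fin (r + 1), (i : ℕ) ≤ s + 1 + ((σ i : Fin (r+1)) : ℕ)
    · have hprodA : ∏ i : Fin (r + 1), A (σ i) i =
          ((∏ i : Fin (r + 1), Nat.factorial (s + 1 + ((σ i : Fin (r+1)) : ℕ) - (i : ℕ)) : ℕ) : ℚ)⁻¹ := by
        push_cast
        rw [← Finset.prod_inv_distrib]
        refine Finset.prod_congr rfl fun i _ => ?_
        rw [hA]
        simp [if_pos (h i)]
      have hsum : ∑ i : Fin (r + 1), (s + 1 + ((σ i : Fin (r+1)) : ℕ) - (i : ℕ)) = g := by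
        have : ((∑ i : Fin (r + 1), (s + 1 + ((σ i : Fin (r+1)) : ℕ) - (i : ℕ)) : ℕ) : ℤ) = (g : ℤ) := by
          push_cast [h]
          rw [Finset.sum_sub_distrib]
          have hσ : ∑ i : Fin (r + 1), (((σ i : Fin (r+1)) : ℕ) : ℤ) =
              ∑ i : Fin (r + 1), ((i : ℕ) : ℤ) :=
            Equiv.sum_comp σ (fun i => ((i : ℕ) : ℤ))
          simp only [Finset.sum_add_distrib, hσ, Finset.sum_const, Finset.card_univ,
            Fintype.card_fin, hg]
          push_cast; ring
        exact_mod_cast this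
      obtain ⟨c, hc⟩ := Nat.prod_factorial_dvd_factorial_sum Finset.univ
        (fun i : Fin (r + 1) => s + 1 + ((σ i : Fin (r+1)) : ℕ) - (i : ℕ))
      rw [hsum] at hc
      refine ⟨(c : ℤ), ?_⟩
      rw [hprodA]
      have hPne : ((∏ i : Fin (r + 1), Nat.factorial (s + 1 + ((σ i : Fin (r+1)) : ℕ) - (i : ℕ)) : ℕ) : ℚ) ≠ 0 := by
        exact_mod_cast (Finset.prod_pos fun i _ => Nat.factorial_pos _).ne'
      field_simp
      rw [mul_comm]
      exact_mod_cast hc.symm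
    · push_neg at h
      obtain ⟨i, hi⟩ := h
      refine ⟨0, ?_⟩
      have h0 : A (σ i) i = 0 := by rw [hA]; simp [if_neg (by omega : ¬ ((i:ℕ) ≤ s + 1 + ((σ i : Fin (r+1)) : ℕ)))]
      have hzero : ∏ x : Fin (r + 1), A (σ x) x = 0 :=
        Finset.prod_eq_zero (Finset.mem_univ i) h0
      rw [hzero]
      simp
  choose zfun hzfun using hterm
  set z : ℤ := ∑ σ : Equiv.Perm (Fin (r + 1)), ((Equiv.Perm.sign σ : ℤ) * zfun σ) with hz
  have hzQ : (z : ℚ) = (Nat.factorial g : ℚ) * A.det := by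
    rw [Matrix.det_apply, Finset.mul_sum, hz]
    push_cast
    refine Finset.sum_congr rfl fun σ _ => ?_
    rw [hzfun σ]
    rw [Units.smul_def, zsmul_eq_mul]
    push_cast
    ring
  -- combine
  have hmain : ((∏ i : Fin (r + 1), Nat.factorial (s + 1 + (i : ℕ)) : ℕ) : ℚ) * (z : ℚ) =
      ((Nat.superFactorial r * Nat.factorial g : ℕ) : ℚ) := by
    push_cast
    rw [hzQ]
    calc (∏ i : Fin (r + 1), ((s + 1 + (i : ℕ))! : ℚ)) * ((g)! * A.det)
        = ((∏ i : Fin (r + 1), ((s + 1 + (i : ℕ))! : ℚ)) * A.det) * (g)! := by ring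
      _ = (Nat.superFactorial r : ℚ) * (g)! := by rw [hdetQ]
  have hmainZ : ((∏ i : Fin (r + 1), Nat.factorial (s + 1 + (i : ℕ)) : ℕ) : ℤ) * z =
      ((Nat.superFactorial r * Nat.factorial g : ℕ) : ℤ) := by
    exact_mod_cast hmain
  have hdvdZ : ((∏ i : Fin (r + 1), Nat.factorial (s + 1 + (i : ℕ)) : ℕ) : ℤ) ∣
      ((Nat.superFactorial r * Nat.factorial g : ℕ) : ℤ) := ⟨z, hmainZ.symm⟩
  have hdvdN := Int.natCast_dvd_natCast.mp hdvdZ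
  have e1 : (∏ i ∈ Finset.range (r + 1), Nat.factorial (s + 1 + i)) =
      ∏ i : Fin (r + 1), Nat.factorial (s + 1 + (i : ℕ)) :=
    (Fin.prod_univ_eq_prod_range (fun i => Nat.factorial (s + 1 + i)) (r + 1)).symm
  have e2 : (∏ i ∈ Finset.range (r + 1), Nat.factorial i) = Nat.superFactorial r :=
    Nat.prod_range_succ_factorial r
  rw [e1, e2]
  exact hdvdN

theorem castelnuovo_number_integral (r s : ℕ) (hr : 1 ≤ r) (hs : 1 ≤ s) :
    (∏ i ∈ Finset.range (r + 1), Nat.factorial (s + 1 + i)) ∣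
      (∏ i ∈ Finset.range (r + 1), Nat.factorial i) *
        Nat.factorial ((r + 1) * (s + 1)) ∧
    0 < ((∏ i ∈ Finset.range (r + 1), Nat.factorial i) *
          Nat.factorial ((r + 1) * (s + 1))) /
        (∏ i ∈ Finset.range (r + 1), Nat.factorial (s + 1 + i)) := by
  have hdvd := castelnuovo_dvd r s
  refine ⟨hdvd, ?_⟩
  have hpos : 0 < (∏ i ∈ Finset.range (r + 1), Nat.factorial i) *
      Nat.factorial ((r + 1) * (s + 1)) := by
    apply Nat.mul_pos
    · exact Finset.prod_pos fun i _ => Nat.factorial_pos i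
    · exact Nat.factorial_pos _
  exact Nat.div_pos (Nat.le_of_dvd hpos hdvd) (Finset.prod_pos fun i _ => Nat.factorial_pos _)
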